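/- Let f : S → E be a strictly increasing function from a set of epsilon numbers into the epsilon numbers, and let y be an ordinal with Ep(y) ⊆ S. Then y is additively principal but not an epsilon number if and only if y[f] is additively principal but not an epsilon number. -/

import Mathlib

open Ordinal

/-- An ordinal is an epsilon number if it is a fixed point of `ω ^ ·`. -/
def IsEpsilon (x : Ordinal.{0}) : Prop := ω ^ x = x

theorem cnf_fst_lt {x : Ordinal.{0}} (h : ¬ ω ^ x = x) {p : Ordinal × Ordinal}
    (hp : p ∈ CNF ω x) : p.1 < x := by
  have hx : x ≠ 0 := by
    rintro rfl
    simp [Ordinal.CNF.zero_right] at hp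
  have h1 : p.1 ≤ Ordinal.log ω x := Ordinal.CNF.fst_le_log hp
  have h2 : Ordinal.log ω x < x := by
    rcases lt_or_eq_of_le (Ordinal.log_le_self ω x) with h' | h'
    · exact h'
    · exfalso
      have hle := Ordinal.opow_log_le_self ω hx
      rw [h'] at hle
      exact h (le_antisymm hle (Ordinal.right_le_opow x one_lt_omega0))
  exact lt_of_le_of_lt h1 h2

open scoped Classical in
/-- The set of epsilon numbers occurring hereditarily in the Cantor normal form of `x`. -/
noncomputable def Ep (x : Ordinal.{0}) : Set Ordinal.{0} :=
  if h : ω ^ x = x then {x}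
  else ⋃ p : {q // q ∈ CNF ω x}, Ep p.1.1
termination_by x
decreasing_by exact cnf_fst_lt h p.2

open scoped Classical in
/-- Simultaneous substitution of the epsilon numbers occurring hereditarily in the
Cantor normal form of `x` by their values under `f`. -/
noncomputable def subst (f : Ordinal.{0} → Ordinal.{0}) (x : Ordinal.{0}) : Ordinal.{0} :=
  if h : ω ^ x = x then f x
  else (((CNF ω x).attach).map (fun p => ω ^ subst f p.1.1 * p.1.2)).sum
termination_by x
decreasing_by exact cnf_fst_lt h p.2

theorem Ep_eps {x : Ordinal} (h : ω ^ x = x) : Ep x = {x} := by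
  rw [Ep, dif_pos h]

theorem Ep_not_eps {x : Ordinal} (h : ¬ ω ^ x = x) :
    Ep x = ⋃ p : {q // q ∈ CNF ω x}, Ep p.1.1 := by
  rw [Ep, dif_neg h]

theorem Ep_subset_of_mem {x : Ordinal} (h : ¬ ω ^ x = x) {p : Ordinal × Ordinal}
    (hp : p ∈ CNF ω x) : Ep p.1 ⊆ Ep x := by
  rw [Ep_not_eps h]
  exact Set.subset_iUnion (fun q : {q // q ∈ CNF ω x} => Ep q.1.1) ⟨p, hp⟩

theorem subst_eps (f : Ordinal → Ordinal) {x : Ordinal} (h : ω ^ x = x) : subst f x = f x := by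
  rw [subst, dif_pos h]

theorem subst_not_eps (f : Ordinal → Ordinal) {x : Ordinal} (h : ¬ ω ^ x = x) :
    subst f x = ((CNF ω x).map (fun p => ω ^ subst f p.1 * p.2)).sum := by
  rw [subst, dif_neg h]
  congr 1
  conv_rhs => rw [← List.attach_map_subtype_val (CNF ω x), List.map_map]
  rfl

theorem subst_zero (f : Ordinal → Ordinal) : subst f 0 = 0 := by
  rw [subst_not_eps f (by simp), CNF.zero_right]
  rfl

theorem log_lt_self_of_not_eps {x : Ordinal} (h : ¬ ω ^ x = x) (hx : x ≠ 0) :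
    log ω x < x := by
  rcases lt_or_eq_of_le (Ordinal.log_le_self ω x) with h' | h'
  · exact h'
  · exfalso
    have hle := Ordinal.opow_log_le_self ω hx
    rw [h'] at hle
    exact h (le_antisymm hle (Ordinal.right_le_opow x one_lt_omega0))

theorem log_eps {x : Ordinal} (h : ω ^ x = x) : log ω x = x := by
  conv_lhs => rw [← h]
  exact log_opow one_lt_omega0 x

theorem eps_ne_zero {x : Ordinal} (h : ω ^ x = x) : x ≠ 0 := by
  intro h0
  rw [h0] at h
  simp at h

theorem CNF_eps {r : Ordinal} (h : ω ^ r = r) : CNF ω r = [(r, 1)] := by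
  have hr0 := eps_ne_zero h
  rw [CNF.ne_zero hr0, log_eps h, h, Ordinal.div_self hr0, Ordinal.mod_self, CNF.zero_right]

theorem Ep_log_subset {x : Ordinal} (hx : x ≠ 0) : Ep (log ω x) ⊆ Ep x := by
  by_cases h : ω ^ x = x
  · rw [log_eps h]
  · exact Ep_subset_of_mem h (p := (log ω x, x / ω ^ log ω x))
      (by rw [CNF.ne_zero hx]; exact List.mem_cons_self)

theorem Ep_mod_subset {x : Ordinal} (hx : x ≠ 0) (h : ¬ ω ^ x = x) :
    Ep (x % ω ^ log ω x) ⊆ Ep x := by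
  have htail : ∀ p : Ordinal × Ordinal, p ∈ CNF ω (x % ω ^ log ω x) → p ∈ CNF ω x := by
    intro p hp
    rw [CNF.ne_zero hx]
    exact List.mem_cons_of_mem _ hp
  by_cases hre : ω ^ (x % ω ^ log ω x) = x % ω ^ log ω x
  · have hmem : ((x % ω ^ log ω x, 1) : Ordinal × Ordinal) ∈ CNF ω x :=
      htail _ (by rw [CNF_eps hre]; exact List.mem_cons_self)
    exact Ep_subset_of_mem h hmem
  · rw [Ep_not_eps hre]
    apply Set.iUnion_subset
    intro p
    exact Ep_subset_of_mem h (htail _ p.2)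

theorem subst_pos (f : Ordinal → Ordinal) (S : Set Ordinal)
    (hfE : ∀ e ∈ S, IsEpsilon (f e)) {x : Ordinal} (hx : x ≠ 0) (hxS : Ep x ⊆ S) :
    0 < subst f x := by
  by_cases h : ω ^ x = x
  · rw [subst_eps f h]
    have hxmem : x ∈ S := by rw [Ep_eps h] at hxS; exact hxS rfl
    have hfx : ω ^ f x = f x := hfE x hxmem
    rw [← hfx]
    exact opow_pos _ omega0_pos
  · rw [subst_not_eps f h, CNF.ne_zero hx, List.map_cons, List.sum_cons]
    calc (0 : Ordinal) < ω ^ subst f (log ω x) * (x / ω ^ log ω x) :=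
          mul_pos (opow_pos _ omega0_pos) (div_opow_log_pos ω hx)
      _ ≤ _ := le_self_add

theorem subst_split (f : Ordinal → Ordinal) (S : Set Ordinal)
    (hfE : ∀ e ∈ S, IsEpsilon (f e)) {x : Ordinal} (hx : x ≠ 0) (h : ¬ ω ^ x = x)
    (hxS : Ep x ⊆ S) :
    subst f x = ω ^ subst f (log ω x) * (x / ω ^ log ω x) + subst f (x % ω ^ log ω x) := by
  rw [subst_not_eps f h, CNF.ne_zero hx, List.map_cons, List.sum_cons]
  congr 1
  by_cases hr0 : x % ω ^ log ω x = 0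
  · rw [hr0, CNF.zero_right, subst_zero]
    rfl
  by_cases hre : ω ^ (x % ω ^ log ω x) = x % ω ^ log ω x
  · have hrS : x % ω ^ log ω x ∈ S := by
      have hmem : ((x % ω ^ log ω x, 1) : Ordinal × Ordinal) ∈ CNF ω x := by
        rw [CNF.ne_zero hx]
        exact List.mem_cons_of_mem _ (by rw [CNF_eps hre]; exact List.mem_cons_self)
      have hsub := Ep_subset_of_mem h hmem
      have hrEp : x % ω ^ log ω x ∈ Ep (x % ω ^ log ω x) := by
        rw [Ep_eps hre]; rfl
      exact hxS (hsub hrEp)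
    rw [CNF_eps hre]
    simp only [List.map_cons, List.map_nil, List.sum_cons, List.sum_nil, mul_one, add_zero]
    rw [subst_eps f hre]
    exact hfE _ hrS
  · rw [subst_not_eps f hre]

theorem subst_gt (f : Ordinal → Ordinal) (S : Set Ordinal)
    (hfE : ∀ e ∈ S, IsEpsilon (f e)) {z : Ordinal} (hzS : Ep z ⊆ S)
    (hze : ¬ ω ^ z = z) (hz0 : z ≠ 0) (hgt : ω ^ log ω z < z) :
    ω ^ subst f (log ω z) < subst f z := by
  rw [subst_split f S hfE hz0 hze hzS]
  have hc1 : 1 ≤ z / ω ^ log ω z := Order.one_le_iff_pos.mpr (div_opow_log_pos ω hz0)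
  rcases lt_or_eq_of_le hc1 with h1c | h1c
  · calc ω ^ subst f (log ω z) = ω ^ subst f (log ω z) * 1 := (mul_one _).symm
      _ < ω ^ subst f (log ω z) * (z / ω ^ log ω z) :=
          mul_lt_mul_of_pos_left h1c (opow_pos _ omega0_pos)
      _ ≤ _ := le_self_add
  · have hrne : z % ω ^ log ω z ≠ 0 := by
      intro h0
      have hdm := Ordinal.div_add_mod z (ω ^ log ω z)
      rw [← h1c, mul_one, h0, add_zero] at hdm
      exact absurd hdm (ne_of_lt hgt)
    have hrS : Ep (z % ω ^ log ω z) ⊆ S := (Ep_mod_subset hz0 hze).trans hzS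
    have hpos := subst_pos f S hfE hrne hrS
    calc ω ^ subst f (log ω z) = ω ^ subst f (log ω z) * (z / ω ^ log ω z) + 0 := by
          rw [← h1c, mul_one, add_zero]
      _ < _ := add_lt_add_right hpos _

theorem subst_main (f : Ordinal → Ordinal) (S : Set Ordinal)
    (hfE : ∀ e ∈ S, IsEpsilon (f e)) (hf : StrictMonoOn f S) :
    ∀ z : Ordinal, Ep z ⊆ S →
      (z ≠ 0 → ω ^ subst f (log ω z) ≤ subst f z ∧ subst f z < ω ^ (subst f (log ω z) + 1)) ∧
      (∀ x, x < z → Ep x ⊆ S → subst f x < subst f z) := by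
  intro z
  induction z using Ordinal.induction with
  | _ z IH =>
  intro hzS
  by_cases hz0 : z = 0
  · subst hz0
    exact ⟨fun h => absurd rfl h, fun x hx _ => absurd hx (not_lt_of_ge zero_le)⟩
  by_cases hze : ω ^ z = z
  · -- z is an epsilon number
    have hzmem : z ∈ S := by rw [Ep_eps hze] at hzS; exact hzS rfl
    have hfz : ω ^ f z = f z := hfE z hzmem
    have hlog : log ω z = z := log_eps hze
    have hsub : subst f z = f z := subst_eps f hze
    have hbounds : ω ^ subst f (log ω z) ≤ subst f z ∧
        subst f z < ω ^ (subst f (log ω z) + 1) := by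
      rw [hlog, hsub, hfz]
      refine ⟨le_refl _, ?_⟩
      conv_lhs => rw [← hfz]
      rw [add_one_eq_succ]
      exact (opow_lt_opow_iff_right one_lt_omega0).mpr (Order.lt_succ _)
    refine ⟨fun _ => hbounds, ?_⟩
    intro x
    induction x using Ordinal.induction with
    | _ x IHx =>
    intro hxz hxS
    by_cases hx0 : x = 0
    · rw [hx0, subst_zero, hsub, ← hfz]
      exact opow_pos _ omega0_pos
    by_cases hxe : ω ^ x = x
    · have hxmem : x ∈ S := by rw [Ep_eps hxe] at hxS; exact hxS rfl
      rw [subst_eps f hxe, hsub]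
      exact hf hxmem hzmem hxz
    · have ha : log ω x < x := log_lt_self_of_not_eps hxe hx0
      have haS : Ep (log ω x) ⊆ S := (Ep_log_subset hx0).trans hxS
      have hub := ((IH x hxz hxS).1 hx0).2
      have hrec : subst f (log ω x) < subst f z := IHx (log ω x) ha (ha.trans hxz) haS
      rw [hsub] at hrec ⊢
      calc subst f x < ω ^ (subst f (log ω x) + 1) := hub
        _ ≤ ω ^ f z := opow_le_opow_right omega0_pos
            (by rw [add_one_eq_succ]; exact Order.succ_le_of_lt hrec)
        _ = f z := hfz
  · -- z is not an epsilon number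
    have hb_lt : log ω z < z := log_lt_self_of_not_eps hze hz0
    have hbS : Ep (log ω z) ⊆ S := (Ep_log_subset hz0).trans hzS
    have hrS : Ep (z % ω ^ log ω z) ⊆ S := (Ep_mod_subset hz0 hze).trans hzS
    have hsplit := subst_split f S hfE hz0 hze hzS
    have hropow : z % ω ^ log ω z < ω ^ log ω z :=
      Ordinal.mod_lt z (opow_ne_zero _ omega0_ne_zero)
    have hrz : z % ω ^ log ω z < z := hropow.trans_le (opow_log_le_self ω hz0)
    have hc_pos : 0 < z / ω ^ log ω z := div_opow_log_pos ω hz0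
    have hc_lt : z / ω ^ log ω z < ω := div_opow_log_lt z one_lt_omega0
    have key : ∀ w, w < ω ^ log ω z → w < z → Ep w ⊆ S →
        subst f w < ω ^ subst f (log ω z) := by
      intro w hw hwz hwS
      by_cases hw0 : w = 0
      · rw [hw0, subst_zero]; exact opow_pos _ omega0_pos
      · have h1 := ((IH w hwz hwS).1 hw0).2
        have hlw : log ω w < log ω z := (lt_opow_iff_log_lt one_lt_omega0 hw0).mp hw
        have hlwS : Ep (log ω w) ⊆ S := (Ep_log_subset hw0).trans hwS
        have h2 : subst f (log ω w) < subst f (log ω z) :=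
          (IH (log ω z) hb_lt hbS).2 (log ω w) hlw hlwS
        calc subst f w < ω ^ (subst f (log ω w) + 1) := h1
          _ ≤ ω ^ subst f (log ω z) := opow_le_opow_right omega0_pos
              (by rw [add_one_eq_succ]; exact Order.succ_le_of_lt h2)
    have hbounds : ω ^ subst f (log ω z) ≤ subst f z ∧
        subst f z < ω ^ (subst f (log ω z) + 1) := by
      constructor
      · rw [hsplit]
        calc ω ^ subst f (log ω z) = ω ^ subst f (log ω z) * 1 := (mul_one _).symm
          _ ≤ ω ^ subst f (log ω z) * (z / ω ^ log ω z) :=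
              mul_le_mul_right (Order.one_le_iff_pos.mpr hc_pos) _
          _ ≤ _ := le_self_add
      · rw [hsplit]
        have hrb : subst f (z % ω ^ log ω z) < ω ^ subst f (log ω z) := key _ hropow hrz hrS
        calc ω ^ subst f (log ω z) * (z / ω ^ log ω z) + subst f (z % ω ^ log ω z)
            < ω ^ subst f (log ω z) * (z / ω ^ log ω z) + ω ^ subst f (log ω z) :=
              add_lt_add_right hrb _
          _ = ω ^ subst f (log ω z) * (z / ω ^ log ω z + 1) := by rw [mul_add, mul_one]
          _ ≤ ω ^ subst f (log ω z) * ω := mul_le_mul_right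
              (by rw [add_one_eq_succ]; exact (isSuccLimit_omega0.succ_lt hc_lt).le) _
          _ = ω ^ (subst f (log ω z) + 1) := by
              rw [add_one_eq_succ, opow_succ]
    refine ⟨fun _ => hbounds, ?_⟩
    intro x hxz hxS
    by_cases hx0 : x = 0
    · rw [hx0, subst_zero]
      exact lt_of_lt_of_le (opow_pos _ omega0_pos) hbounds.1
    by_cases hxe : ω ^ x = x
    · have hxb : x ≤ log ω z :=
        (opow_le_iff_le_log one_lt_omega0 hz0).mp (by rw [hxe]; exact hxz.le)
      rcases lt_or_eq_of_le hxb with hlt | heq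
      · have h1 : subst f x < subst f (log ω z) := (IH (log ω z) hb_lt hbS).2 x hlt hxS
        calc subst f x < subst f (log ω z) := h1
          _ ≤ ω ^ subst f (log ω z) := right_le_opow _ one_lt_omega0
          _ ≤ subst f z := hbounds.1
      · have hgt : ω ^ log ω z < z := by rw [← heq, hxe]; exact hxz
        have hsg := subst_gt f S hfE hzS hze hz0 hgt
        calc subst f x = subst f (log ω z) := by rw [heq]
          _ ≤ ω ^ subst f (log ω z) := right_le_opow _ one_lt_omega0
          _ < subst f z := hsg
    · have ha : log ω x < x := log_lt_self_of_not_eps hxe hx0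
      have haS : Ep (log ω x) ⊆ S := (Ep_log_subset hx0).trans hxS
      have hab : log ω x ≤ log ω z := log_mono_right ω hxz.le
      rcases lt_or_eq_of_le hab with hlt | heq
      · have h2 : subst f (log ω x) < subst f (log ω z) :=
          (IH (log ω z) hb_lt hbS).2 _ hlt haS
        have h1 := ((IH x hxz hxS).1 hx0).2
        calc subst f x < ω ^ (subst f (log ω x) + 1) := h1
          _ ≤ ω ^ subst f (log ω z) := opow_le_opow_right omega0_pos
              (by rw [add_one_eq_succ]; exact Order.succ_le_of_lt h2)
          _ ≤ subst f z := hbounds.1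
      · have hsplitx := subst_split f S hfE hx0 hxe hxS
        have hxrS : Ep (x % ω ^ log ω x) ⊆ S := (Ep_mod_subset hx0 hxe).trans hxS
        have hxropow : x % ω ^ log ω x < ω ^ log ω x :=
          Ordinal.mod_lt x (opow_ne_zero _ omega0_ne_zero)
        rw [heq] at hsplitx hxrS hxropow
        have hcc : x / ω ^ log ω z ≤ z / ω ^ log ω z := Ordinal.div_le_left hxz.le _
        rcases lt_or_eq_of_le hcc with hclt | hceq
        · have hw : x % ω ^ log ω z < z := lt_of_lt_of_le hxropow (opow_log_le_self ω hz0)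
          have hkey := key _ hxropow hw hxrS
          rw [hsplitx, hsplit]
          calc ω ^ subst f (log ω z) * (x / ω ^ log ω z) + subst f (x % ω ^ log ω z)
              < ω ^ subst f (log ω z) * (x / ω ^ log ω z) + ω ^ subst f (log ω z) :=
                add_lt_add_right hkey _
            _ = ω ^ subst f (log ω z) * (x / ω ^ log ω z + 1) := by rw [mul_add, mul_one]
            _ ≤ ω ^ subst f (log ω z) * (z / ω ^ log ω z) := mul_le_mul_right
                (by rw [add_one_eq_succ]; exact Order.succ_le_of_lt hclt) _
            _ ≤ _ := le_self_add
        · have hx_eq := Ordinal.div_add_mod x (ω ^ log ω z)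
          have hz_eq := Ordinal.div_add_mod z (ω ^ log ω z)
          have hrr : x % ω ^ log ω z < z % ω ^ log ω z := by
            by_contra hcon
            push_neg at hcon
            apply absurd hxz
            push_neg
            calc z = ω ^ log ω z * (z / ω ^ log ω z) + z % ω ^ log ω z := hz_eq.symm
              _ ≤ ω ^ log ω z * (x / ω ^ log ω z) + x % ω ^ log ω z := by
                  rw [← hceq]
                  exact add_le_add_right hcon _
              _ = x := hx_eq
          have h3 : subst f (x % ω ^ log ω z) < subst f (z % ω ^ log ω z) :=
            (IH (z % ω ^ log ω z) hrz hrS).2 _ hrr hxrS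
          rw [hsplitx, hsplit, hceq]
          exact add_lt_add_right h3 _

theorem stmt19 (S : Set Ordinal.{0}) (f : Ordinal → Ordinal)
    (hS : ∀ e ∈ S, IsEpsilon e) (hfE : ∀ e ∈ S, IsEpsilon (f e))
    (hf : StrictMonoOn f S)
    (y : Ordinal) (hy : Ep y ⊆ S) :
    ((0 < y ∧ Ordinal.Principal (· + ·) y) ∧ ¬ IsEpsilon y) ↔
      ((0 < subst f y ∧ Ordinal.Principal (· + ·) (subst f y)) ∧
        ¬ IsEpsilon (subst f y)) := by
  by_cases hye : ω ^ y = y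
  · have yS : y ∈ S := by rw [Ep_eps hye] at hy; exact hy rfl
    constructor
    · rintro ⟨-, h⟩
      exact absurd hye h
    · rintro ⟨-, h⟩
      rw [subst_eps f hye] at h
      exact absurd (hfE y yS) h
  by_cases hy0 : y = 0
  · subst hy0
    rw [subst_zero]
  · have main := subst_main f S hfE hf
    have bounds := (main y hy).1 hy0
    have hbz : log ω y < y := log_lt_self_of_not_eps hye hy0
    have hbS : Ep (log ω y) ⊆ S := (Ep_log_subset hy0).trans hy
    have hvpos : 0 < subst f y := lt_of_lt_of_le (opow_pos _ omega0_pos) bounds.1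
    have hlogv : log ω (subst f y) = subst f (log ω y) :=
      (log_eq_iff one_lt_omega0 hvpos.ne' _).mpr
        ⟨bounds.1, by exact bounds.2⟩
    have hvne : ¬ ω ^ subst f y = subst f y := by
      intro hcon
      have h1 : log ω (subst f y) = subst f y := log_eps hcon
      have h2 : subst f y = subst f (log ω y) := by rw [← h1, hlogv]
      have h3 := (main y hy).2 (log ω y) hbz hbS
      rw [← h2] at h3
      exact lt_irrefl _ h3
    constructor
    · rintro ⟨⟨-, hp⟩, -⟩
      refine ⟨⟨hvpos, ?_⟩, hvne⟩
      rcases principal_add_iff_zero_or_omega0_opow.mp hp with h | ⟨a, ha⟩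
      · exact absurd h hy0
      · simp only at ha
        have hla : log ω y = a := by rw [← ha, log_opow one_lt_omega0]
        have h4 : y / ω ^ log ω y = 1 := by
          rw [hla, ← ha, Ordinal.div_self (opow_ne_zero a omega0_ne_zero)]
        have h5 : y % ω ^ log ω y = 0 := by
          rw [hla, ← ha, Ordinal.mod_self]
        have hveq : subst f y = ω ^ subst f (log ω y) := by
          rw [subst_split f S hfE hy0 hye hy, h4, h5, mul_one, subst_zero, add_zero]
        rw [hveq]
        exact principal_add_omega0_opow _
    · rintro ⟨⟨-, hp⟩, -⟩
      refine ⟨⟨pos_iff_ne_zero.mpr hy0, ?_⟩, hye⟩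
      by_contra hnp
      have hyne : ω ^ log ω y ≠ y := by
        intro h
        exact hnp (h ▸ principal_add_omega0_opow (log ω y))
      have hygt : ω ^ log ω y < y := lt_of_le_of_ne (opow_log_le_self ω hy0) hyne
      have hlt := subst_gt f S hfE hy hye hy0 hygt
      rcases principal_add_iff_zero_or_omega0_opow.mp hp with h | ⟨a, ha⟩
      · exact absurd h hvpos.ne'
      · simp only at ha
        have hla : log ω (subst f y) = a := by rw [← ha, log_opow one_lt_omega0]
        have hveq : subst f y = ω ^ subst f (log ω y) := by
          rw [← ha]
          congr 1
          rw [← hla, hlogv]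
        rw [hveq] at hlt
        exact lt_irrefl _ hlt
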